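/- arXiv:1609.08353 — 3 statements merged into one kernel-verified Lean document; each statement's English description precedes it below -/
import Mathlib

section
/- For fixed k ≥ 2, A_{n,k−1} ~ (1/(k+1)) · 4^{n+1} · sin²(π/(k+1)) · cos^{2n}(π/(k+1)) as n → ∞; that is, the ratio of A_{n,k−1} to this expression tends to 1. -/
open Finset Real Filter

/-- A Dyck-path sequence `a_1, …, a_{2n}` (with `a 0 = 0` and zero padding
beyond index `2n` so that the set of such functions is finite):
`a 1 = 1`, `a (2n) = 0`, and consecutive values differ by exactly 1. -/
def IsDyckSeq (n : ℕ) (a : ℕ → ℕ) : Prop :=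
  a 1 = 1 ∧ a (2*n) = 0 ∧
  (∀ i, 1 ≤ i → i < 2*n → (a (i+1) = a i + 1 ∨ a i = a (i+1) + 1)) ∧
  a 0 = 0 ∧ ∀ i, 2*n < i → a i = 0

/-- `A n t`: number of Dyck-path sequences of semilength `n` of height at most `t`,
with the convention `A 0 t = 1`. -/
noncomputable def A (n t : ℕ) : ℕ :=
  if n = 0 then 1
  else Nat.card {a : ℕ → ℕ // IsDyckSeq n a ∧ ∀ i, a i ≤ t}

/-- `B n k`: number of Dyck-path sequences of semilength `n` of height at least `k`,
with the conventions `B 0 0 = 1`, `B 0 k = 0` for `k ≥ 1`. -/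
noncomputable def B (n k : ℕ) : ℕ :=
  if n = 0 then (if k = 0 then 1 else 0)
  else Nat.card {a : ℕ → ℕ // IsDyckSeq n a ∧ ∃ i, k ≤ a i}

/-- The `n`-th Catalan number `C_n = (1/(n+1)) * binomial(2n, n)`. -/
def C (n : ℕ) : ℕ := (2*n).choose n / (n + 1)

/-- Binomial coefficient with integer lower index, zero when negative. -/
def chooseZ (m : ℕ) (r : ℤ) : ℕ := if 0 ≤ r then m.choose r.toNat else 0


/-- Walk counting sequence. -/
def cW (t : ℕ) : ℕ → ℕ → ℕ
  | 0, h => if h = 0 then 1 else 0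
  | m+1, h => if h ≤ t then (cW t m (h+1) + if h = 0 then 0 else cW t m (h-1)) else 0

lemma cW_eq_zero (t : ℕ) : ∀ m h, t < h → cW t m h = 0
  | 0, h, hh => by simp only [cW]; rw [if_neg]; omega
  | m+1, h, hh => by simp only [cW]; rw [if_neg]; omega

/-- Walk predicate. -/
def QW (t m h : ℕ) (a : ℕ → ℕ) : Prop :=
  a 0 = 0 ∧ (∀ i, i < m → (a (i+1) = a i + 1 ∨ a i = a (i+1) + 1)) ∧
    (∀ i, a i ≤ t) ∧ (∀ i, m < i → a i = 0) ∧ a m = h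

lemma QW_finite (t m h : ℕ) : Finite {a : ℕ → ℕ // QW t m h a} := by
  have hinj : Function.Injective
      (fun a : {a : ℕ → ℕ // QW t m h a} =>
        (fun i : Fin (m+1) => (⟨a.1 i.1, Nat.lt_succ_of_le (a.2.2.2.1 i.1)⟩ : Fin (t+1)))) := by
    rintro ⟨a, ha⟩ ⟨b, hb⟩ hab
    simp only [Subtype.mk.injEq]
    funext i
    rcases le_or_gt i m with hi | hi
    · have := congrFun hab ⟨i, by omega⟩
      simpa [Fin.mk.injEq] using this
    · rw [ha.2.2.2.1 i hi, hb.2.2.2.1 i hi]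
  exact Finite.of_injective _ hinj

instance (t m h : ℕ) : Finite {a : ℕ → ℕ // QW t m h a} := QW_finite t m h

lemma QW_zero (t h : ℕ) (a : ℕ → ℕ) : QW t 0 h a ↔ (h = 0 ∧ a = fun _ => 0) := by
  constructor
  · rintro ⟨h0, _, _, hgt, hm⟩
    refine ⟨by omega, ?_⟩
    funext i
    rcases Nat.eq_zero_or_pos i with hi | hi
    · simp [hi, h0]
    · exact hgt i hi
  · rintro ⟨rfl, rfl⟩
    exact ⟨rfl, fun i hi => by omega, fun i => Nat.zero_le t, fun i _ => rfl, rfl⟩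

lemma QW_trunc {t m h : ℕ} {a : ℕ → ℕ} (ha : QW t (m+1) h a) :
    QW t m (a m) (Function.update a (m+1) 0) := by
  obtain ⟨h0, hstep, hle, hgt, hm⟩ := ha
  refine ⟨?_, ?_, ?_, ?_, ?_⟩
  · rw [Function.update_of_ne (by omega)]; exact h0
  · intro i hi
    rw [Function.update_of_ne (by omega), Function.update_of_ne (by omega)]
    exact hstep i (by omega)
  · intro i
    rcases eq_or_ne i (m+1) with rfl | hi
    · simp
    · rw [Function.update_of_ne hi]; exact hle i
  · intro i hi
    rcases eq_or_ne i (m+1) with rfl | hne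
    · simp
    · rw [Function.update_of_ne hne]; exact hgt i (by omega)
  · rw [Function.update_of_ne (by omega)]

lemma QW_ext {t m h h' : ℕ} {b : ℕ → ℕ} (hb : QW t m h' b) (hht : h ≤ t)
    (hadj : h = h' + 1 ∨ h' = h + 1) :
    QW t (m+1) h (Function.update b (m+1) h) := by
  obtain ⟨h0, hstep, hle, hgt, hm⟩ := hb
  refine ⟨?_, ?_, ?_, ?_, ?_⟩
  · rw [Function.update_of_ne (by omega)]; exact h0
  · intro i hi
    rcases eq_or_ne i m with rfl | hne
    · rw [Function.update_self, Function.update_of_ne (by omega), hm]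
      tauto
    · rw [Function.update_of_ne (by omega), Function.update_of_ne (by omega)]
      exact hstep i (by omega)
  · intro i
    rcases eq_or_ne i (m+1) with rfl | hi
    · simpa using hht
    · rw [Function.update_of_ne hi]; exact hle i
  · intro i hi
    rw [Function.update_of_ne (by omega)]
    exact hgt i (by omega)
  · simp

lemma QW_last_adj {t m h : ℕ} {a : ℕ → ℕ} (ha : QW t (m+1) h a) :
    h = a m + 1 ∨ a m = h + 1 := by
  obtain ⟨_, hstep, _, _, hm⟩ := ha
  have := hstep m (by omega)
  omega

lemma update_trunc_eq {t m h : ℕ} {a : ℕ → ℕ} (ha : QW t (m+1) h a) :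
    Function.update (Function.update a (m+1) 0) (m+1) h = a := by
  rw [Function.update_idem]
  funext i
  rcases eq_or_ne i (m+1) with rfl | hi
  · rw [Function.update_self, ha.2.2.2.2]
  · rw [Function.update_of_ne hi]

lemma trunc_update_eq {t m h h' : ℕ} {b : ℕ → ℕ} (hb : QW t m h' b) :
    Function.update (Function.update b (m+1) h) (m+1) 0 = b := by
  rw [Function.update_idem]
  funext i
  rcases eq_or_ne i (m+1) with rfl | hi
  · rw [Function.update_self, hb.2.2.2.1 (m+1) (by omega)]
  · rw [Function.update_of_ne hi]

lemma update_apply_m {m h : ℕ} (b : ℕ → ℕ) :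
    Function.update b (m+1) h m = b m := Function.update_of_ne (by omega) _ _


def gZ (t m : ℕ) (b : {b : ℕ → ℕ // QW t m 1 b}) : {a : ℕ → ℕ // QW t (m+1) 0 a} :=
  ⟨Function.update b.1 (m+1) 0, QW_ext b.2 (Nat.zero_le t) (by omega)⟩

def gS (t m h : ℕ) (hht : h ≤ t) (hh0 : h ≠ 0) :
    ({b : ℕ → ℕ // QW t m (h+1) b} ⊕ {b : ℕ → ℕ // QW t m (h-1) b}) →
      {a : ℕ → ℕ // QW t (m+1) h a} :=
  Sum.elim (fun b => ⟨Function.update b.1 (m+1) h, QW_ext b.2 hht (Or.inr rfl)⟩)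
           (fun b => ⟨Function.update b.1 (m+1) h, QW_ext b.2 hht (Or.inl (by omega))⟩)

lemma card_QW (t : ℕ) : ∀ m h, Nat.card {a : ℕ → ℕ // QW t m h a} = cW t m h := by
  intro m
  induction m with
  | zero =>
    intro h
    rcases eq_or_ne h 0 with rfl | hh
    · rw [show cW t 0 0 = 1 by simp [cW]]
      rw [Nat.card_eq_one_iff_unique]
      refine ⟨⟨?_⟩, ⟨⟨fun _ => 0, (QW_zero t 0 _).2 ⟨rfl, rfl⟩⟩⟩⟩
      rintro ⟨a, ha⟩ ⟨b, hb⟩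
      rw [QW_zero] at ha hb
      simp [ha.2, hb.2]
    · rw [show cW t 0 h = 0 by simp [cW, hh], Nat.card_eq_zero]
      exact Or.inl ⟨fun a => hh ((QW_zero t h a.1).1 a.2).1⟩
  | succ m ih =>
    intro h
    rcases le_or_gt h t with hht | hht
    · rcases eq_or_ne h 0 with rfl | hh0
      · have hg : Function.Bijective (gZ t m) := by
          constructor
          · rintro ⟨b, hb⟩ ⟨b', hb'⟩ hbb
            have hval : Function.update b (m+1) 0 = Function.update b' (m+1) 0 :=
              congrArg Subtype.val hbb
            have e1 := trunc_update_eq (h := 0) hb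
            have e2 := trunc_update_eq (h := 0) hb'
            simp only [Subtype.mk.injEq]
            rw [← e1, ← e2, hval]
          · rintro ⟨a, ha⟩
            have h1 : a m = 1 := by have := QW_last_adj ha; omega
            refine ⟨⟨Function.update a (m+1) 0, h1 ▸ QW_trunc ha⟩, ?_⟩
            simp only [gZ, Subtype.mk.injEq]
            exact update_trunc_eq ha
        rw [← Nat.card_congr (Equiv.ofBijective _ hg), ih 1]
        simp [cW]
      · have hg : Function.Bijective (gS t m h hht hh0) := by
          constructor
          · rintro (⟨b, hb⟩ | ⟨b, hb⟩) (⟨b', hb'⟩ | ⟨b', hb'⟩) hbb <;>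
            · have hval : Function.update b (m+1) h = Function.update b' (m+1) h :=
                congrArg Subtype.val hbb
              first
              | · exfalso
                  have := congrFun hval m
                  rw [update_apply_m, update_apply_m, hb.2.2.2.2, hb'.2.2.2.2] at this
                  omega
              | · have e1 := trunc_update_eq (h := h) hb
                  have e2 := trunc_update_eq (h := h) hb'
                  have : b = b' := by rw [← e1, ← e2, hval]
                  subst this
                  rfl
          · rintro ⟨a, ha⟩
            have hadj := QW_last_adj ha
            rcases eq_or_ne (a m) (h+1) with hc | hc
            · refine ⟨Sum.inl ⟨Function.update a (m+1) 0, hc ▸ QW_trunc ha⟩, ?_⟩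
              simp only [gS, Sum.elim_inl, Subtype.mk.injEq]
              exact update_trunc_eq ha
            · have hc' : a m = h - 1 := by omega
              refine ⟨Sum.inr ⟨Function.update a (m+1) 0, hc' ▸ QW_trunc ha⟩, ?_⟩
              simp only [gS, Sum.elim_inr, Subtype.mk.injEq]
              exact update_trunc_eq ha
        rw [← Nat.card_congr (Equiv.ofBijective _ hg), Nat.card_sum, ih (h+1), ih (h-1)]
        simp only [cW, if_pos hht, if_neg hh0]
    · have hem : ∀ a : ℕ → ℕ, ¬ QW t (m+1) h a := by
        rintro a ⟨_, _, hle, _, hm⟩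
        have := hle (m+1)
        omega
      rw [show cW t (m+1) h = 0 by simp only [cW]; rw [if_neg]; omega, Nat.card_eq_zero]
      exact Or.inl ⟨fun a => hem a.1 a.2⟩


lemma exp_ne_one_aux {x : ℝ} (hx0 : 0 < x) (hx1 : x ≤ Real.pi) :
    Complex.exp (x * Complex.I) ≠ 1 := by
  intro hc
  rw [Complex.exp_eq_one_iff] at hc
  obtain ⟨n, hn⟩ := hc
  have h2 : (x : ℂ) = (n : ℂ) * (2 * (Real.pi : ℂ)) := by
    apply mul_right_cancel₀ Complex.I_ne_zero
    rw [hn]; ring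
  have hx : x = n * (2 * Real.pi) := by exact_mod_cast h2
  have hpi := Real.pi_pos
  rcases le_or_gt n 0 with hn0 | hn0
  · have h3 : (n : ℝ) ≤ 0 := by exact_mod_cast hn0
    nlinarith
  · have h3 : (1 : ℝ) ≤ (n : ℝ) := by exact_mod_cast hn0
    nlinarith

lemma cos_sum_half (t d : ℕ) (hd1 : 1 ≤ d) (hd2 : d ≤ t + 2) :
    ∑ j ∈ Finset.range (t+2), Real.cos (j * (d * (Real.pi / (t+2)))) =
      if Even d then 0 else 1 := by
  have hpi := Real.pi_pos
  have hN : (0:ℝ) < (t:ℝ) + 2 := by positivity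
  set x : ℝ := d * (Real.pi / (t+2)) with hxdef
  have hx0 : 0 < x := by
    have : (0:ℝ) < (d:ℝ) := by exact_mod_cast hd1
    positivity
  have hx1 : x ≤ Real.pi := by
    rw [hxdef, mul_div_assoc', div_le_iff₀ hN]
    have : (d : ℝ) ≤ (t : ℝ) + 2 := by exact_mod_cast hd2
    nlinarith
  set z : ℂ := Complex.exp (x * Complex.I) with hzdef
  have hz1 : z ≠ 1 := exp_ne_one_aux hx0 hx1
  have hzj : ∀ j : ℕ, z ^ j = Complex.exp (((j : ℝ) * x : ℝ) * Complex.I) := by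
    intro j
    rw [hzdef, ← Complex.exp_nat_mul]
    push_cast
    ring_nf
  have hzre : ∀ j : ℕ, (z ^ j).re = Real.cos (j * x) := by
    intro j
    rw [hzj j, Complex.exp_ofReal_mul_I_re]
  have hzN : z ^ (t+2) = (-1 : ℂ) ^ d := by
    rw [hzj (t+2)]
    have hxx : (((t+2 : ℕ) : ℝ) * x) = d * Real.pi := by
      rw [hxdef]; push_cast; field_simp
    rw [hxx]
    have : ((d * Real.pi : ℝ) : ℂ) * Complex.I = (d : ℂ) * (Real.pi * Complex.I) := by
      push_cast; ring
    rw [this]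
    rw [show ((d:ℂ) * ((Real.pi:ℂ) * Complex.I)) = ((d:ℕ):ℂ) * ((Real.pi:ℂ) * Complex.I) by norm_num]
    rw [Complex.exp_nat_mul]
    congr 1
    rw [← Complex.exp_pi_mul_I]
  have hsum : ∑ j ∈ Finset.range (t+2), z ^ j = ((-1:ℂ)^d - 1) / (z - 1) := by
    rw [geom_sum_eq hz1, hzN]
  have hre : ∑ j ∈ Finset.range (t+2), Real.cos (j * x) =
      (((-1:ℂ)^d - 1) / (z - 1)).re := by
    rw [← hsum, Complex.re_sum]
    exact Finset.sum_congr rfl fun j _ => (hzre j).symm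
  have hcoslt : Real.cos x < 1 := by
    have := Real.cos_lt_cos_of_nonneg_of_le_pi (le_refl 0) hx1 hx0
    simpa using this
  rcases Nat.even_or_odd d with hev | hod
  · rw [if_pos hev, hre]
    rw [hev.neg_one_pow]
    simp
  · rw [if_neg (Nat.not_even_iff_odd.mpr hod), hre, hod.neg_one_pow]
    have hzre1 : z.re = Real.cos x := Complex.exp_ofReal_mul_I_re x
    have hzim1 : z.im = Real.sin x := Complex.exp_ofReal_mul_I_im x
    have hns : Complex.normSq (z - 1) = 2 - 2 * Real.cos x := by
      rw [Complex.normSq_apply]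
      simp only [Complex.sub_re, Complex.sub_im, Complex.one_re, Complex.one_im,
        hzre1, hzim1]
      have := Real.sin_sq_add_cos_sq x
      nlinarith
    have : ((-1 - 1 : ℂ) / (z - 1)) = (-2 : ℝ) * (z - 1)⁻¹ := by
      push_cast; ring
    rw [this]
    rw [Complex.re_ofReal_mul, Complex.inv_re, hns]
    simp only [Complex.sub_re, Complex.one_re, hzre1]
    have h2c : (2 : ℝ) - 2 * Real.cos x ≠ 0 := by nlinarith
    rw [show (Real.cos x - 1) / (2 - 2 * Real.cos x) = -(1/2) by
      rw [div_eq_iff h2c]; ring]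
    norm_num

/-- spectral expression -/
noncomputable def FW (t m h : ℕ) : ℝ :=
  ∑ j ∈ Finset.range (t+1),
    (2/((t:ℝ)+2)) * Real.sin (((j:ℝ)+1) * (Real.pi/((t:ℝ)+2)))
      * Real.sin (((h:ℝ)+1) * (((j:ℝ)+1) * (Real.pi/((t:ℝ)+2))))
      * (2 * Real.cos (((j:ℝ)+1) * (Real.pi/((t:ℝ)+2))))^m

lemma sin_rec (y : ℝ) (h : ℕ) :
    Real.sin (((h:ℝ)+1)*y) * (2 * Real.cos y) =
      Real.sin (((h:ℝ)+2)*y) + Real.sin ((h:ℝ)*y) := by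
  rw [show ((h:ℝ)+2)*y = ((h:ℝ)+1)*y + y by ring,
    show (h:ℝ)*y = ((h:ℝ)+1)*y - y by ring, Real.sin_add, Real.sin_sub]
  ring

lemma sin_mul_sin (y : ℝ) (h : ℕ) :
    Real.sin y * Real.sin (((h:ℝ)+1)*y) =
      (Real.cos ((h:ℝ)*y) - Real.cos (((h:ℝ)+2)*y))/2 := by
  rw [show (h:ℝ)*y = ((h:ℝ)+1)*y - y by ring,
    show ((h:ℝ)+2)*y = ((h:ℝ)+1)*y + y by ring, Real.cos_sub, Real.cos_add]
  ring

lemma cos_sum_shift (t d : ℕ) (hd1 : 1 ≤ d) (hd2 : d ≤ t+2) :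
    ∑ j ∈ Finset.range (t+1), Real.cos (((j:ℝ)+1) * ((d:ℝ) * (Real.pi/((t:ℝ)+2)))) =
      (if Even d then 0 else 1) - 1 := by
  have h0 := cos_sum_half t d hd1 hd2
  rw [Finset.sum_range_succ'] at h0
  have : ∀ j : ℕ, Real.cos ((((j+1 : ℕ)):ℝ) * ((d:ℝ) * (Real.pi/((t:ℝ)+2)))) =
      Real.cos (((j:ℝ)+1) * ((d:ℝ) * (Real.pi/((t:ℝ)+2)))) := by
    intro j; push_cast; ring_nf
  simp only [this] at h0
  simp only [Nat.cast_zero, zero_mul, Real.cos_zero] at h0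
  linarith [h0]

lemma FW_zero (t h : ℕ) (hh : h ≤ t) : FW t 0 h = if h = 0 then 1 else 0 := by
  have hN : ((t:ℝ)+2) ≠ 0 := by positivity
  have key : ∀ j : ℕ,
      (2/((t:ℝ)+2)) * Real.sin (((j:ℝ)+1) * (Real.pi/((t:ℝ)+2)))
        * Real.sin (((h:ℝ)+1) * (((j:ℝ)+1) * (Real.pi/((t:ℝ)+2))))
        * (2 * Real.cos (((j:ℝ)+1) * (Real.pi/((t:ℝ)+2))))^0
      = (1/((t:ℝ)+2)) * (Real.cos (((j:ℝ)+1) * ((h:ℝ) * (Real.pi/((t:ℝ)+2))))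
          - Real.cos (((j:ℝ)+1) * (((h:ℝ)+2) * (Real.pi/((t:ℝ)+2))))) := by
    intro j
    rw [pow_zero, mul_one]
    have := sin_mul_sin (((j:ℝ)+1) * (Real.pi/((t:ℝ)+2))) h
    rw [mul_assoc, this]
    rw [show ((h:ℝ)) * (((j:ℝ)+1) * (Real.pi/((t:ℝ)+2))) =
      ((j:ℝ)+1) * ((h:ℝ) * (Real.pi/((t:ℝ)+2))) by ring,
      show ((h:ℝ)+2) * (((j:ℝ)+1) * (Real.pi/((t:ℝ)+2))) =
      ((j:ℝ)+1) * (((h:ℝ)+2) * (Real.pi/((t:ℝ)+2))) by ring]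
    ring
  rw [FW]
  rw [Finset.sum_congr rfl (fun j _ => key j)]
  rw [← Finset.mul_sum, Finset.sum_sub_distrib]
  rcases eq_or_ne h 0 with rfl | hh0
  · rw [if_pos rfl]
    have e1 : ∑ j ∈ Finset.range (t+1),
        Real.cos (((j:ℝ)+1) * ((0:ℕ) * (Real.pi/((t:ℝ)+2)))) = (t:ℝ)+1 := by
      simp
    have e2 := cos_sum_shift t 2 (by omega) (by omega)
    rw [show ((0:ℕ):ℝ) = ((0:ℝ)) by norm_num] at e1 ⊢
    push_cast at e2 ⊢
    rw [show ((0:ℝ)+2) = (2:ℝ) by norm_num, e2]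
    rw [show ∑ j ∈ Finset.range (t+1),
        Real.cos (((j:ℝ)+1) * ((0:ℝ) * (Real.pi/((t:ℝ)+2)))) = (t:ℝ)+1 by
      simpa using e1]
    simp only [if_pos, even_two, if_true]
    field_simp
    ring
  · rw [if_neg hh0]
    have e1 := cos_sum_shift t h (by omega) (by omega)
    have e2 := cos_sum_shift t (h+2) (by omega) (by omega)
    have epar : (if Even h then (0:ℝ) else 1) = (if Even (h+2) then (0:ℝ) else 1) := by
      congr 1
      simp [Nat.even_add]
    push_cast at e1 e2 ⊢
    rw [e1, e2, ← epar]
    ring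

lemma FW_top (t m : ℕ) : FW t m (t+1) = 0 := by
  rw [FW]
  apply Finset.sum_eq_zero
  intro j _
  have : (((t+1 : ℕ):ℝ)+1) * (((j:ℝ)+1) * (Real.pi/((t:ℝ)+2))) = ((j+1 : ℕ):ℝ) * Real.pi := by
    push_cast
    field_simp
    ring
  rw [this, Real.sin_nat_mul_pi]
  ring

lemma FW_rec (t m h : ℕ) :
    FW t (m+1) h = FW t m (h+1) + (if h = 0 then 0 else FW t m (h-1)) := by
  have key : ∀ j : ℕ,
      (2/((t:ℝ)+2)) * Real.sin (((j:ℝ)+1) * (Real.pi/((t:ℝ)+2)))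
        * Real.sin (((h:ℝ)+1) * (((j:ℝ)+1) * (Real.pi/((t:ℝ)+2))))
        * (2 * Real.cos (((j:ℝ)+1) * (Real.pi/((t:ℝ)+2))))^(m+1)
      = (2/((t:ℝ)+2)) * Real.sin (((j:ℝ)+1) * (Real.pi/((t:ℝ)+2)))
        * Real.sin (((h:ℝ)+2) * (((j:ℝ)+1) * (Real.pi/((t:ℝ)+2))))
        * (2 * Real.cos (((j:ℝ)+1) * (Real.pi/((t:ℝ)+2))))^m
      + (2/((t:ℝ)+2)) * Real.sin (((j:ℝ)+1) * (Real.pi/((t:ℝ)+2)))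
        * Real.sin ((h:ℝ) * (((j:ℝ)+1) * (Real.pi/((t:ℝ)+2))))
        * (2 * Real.cos (((j:ℝ)+1) * (Real.pi/((t:ℝ)+2))))^m := by
    intro j
    have hs := sin_rec (((j:ℝ)+1) * (Real.pi/((t:ℝ)+2))) h
    rw [pow_succ]
    calc (2/((t:ℝ)+2)) * Real.sin (((j:ℝ)+1) * (Real.pi/((t:ℝ)+2)))
        * Real.sin (((h:ℝ)+1) * (((j:ℝ)+1) * (Real.pi/((t:ℝ)+2))))
        * ((2 * Real.cos (((j:ℝ)+1) * (Real.pi/((t:ℝ)+2))))^m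
           * (2 * Real.cos (((j:ℝ)+1) * (Real.pi/((t:ℝ)+2)))))
        = (2/((t:ℝ)+2)) * Real.sin (((j:ℝ)+1) * (Real.pi/((t:ℝ)+2)))
          * (Real.sin (((h:ℝ)+1) * (((j:ℝ)+1) * (Real.pi/((t:ℝ)+2))))
             * (2 * Real.cos (((j:ℝ)+1) * (Real.pi/((t:ℝ)+2)))))
          * (2 * Real.cos (((j:ℝ)+1) * (Real.pi/((t:ℝ)+2))))^m := by ring
      _ = _ := by rw [hs]; ring
  rcases eq_or_ne h 0 with rfl | hh0
  · rw [if_pos rfl, add_zero, FW, FW]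
    rw [Finset.sum_congr rfl (fun j _ => key j), Finset.sum_add_distrib]
    have : ∑ j ∈ Finset.range (t+1),
        (2/((t:ℝ)+2)) * Real.sin (((j:ℝ)+1) * (Real.pi/((t:ℝ)+2)))
        * Real.sin (((0:ℕ):ℝ) * (((j:ℝ)+1) * (Real.pi/((t:ℝ)+2))))
        * (2 * Real.cos (((j:ℝ)+1) * (Real.pi/((t:ℝ)+2))))^m = 0 := by
      apply Finset.sum_eq_zero
      intro j _
      norm_num
    push_cast at this ⊢
    rw [this, add_zero]
    norm_num
  · rw [if_neg hh0, FW, FW, FW]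
    rw [Finset.sum_congr rfl (fun j _ => key j), Finset.sum_add_distrib]
    congr 1
    · apply Finset.sum_congr rfl
      intro j _
      push_cast
      ring_nf
    · apply Finset.sum_congr rfl
      intro j _
      have : ((h - 1 : ℕ):ℝ) + 1 = (h:ℝ) := by
        have : 1 ≤ h := Nat.one_le_iff_ne_zero.mpr hh0
        push_cast [this]
        ring
      rw [this]

lemma cW_eq_FW (t : ℕ) : ∀ m h, h ≤ t → (cW t m h : ℝ) = FW t m h := by
  intro m
  induction m with
  | zero =>
    intro h hh
    rw [FW_zero t h hh]
    simp only [cW]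
    split <;> simp
  | succ m ih =>
    intro h hh
    rw [FW_rec]
    simp only [cW, if_pos hh]
    push_cast
    congr 1
    · rcases le_or_gt (h+1) t with h1 | h1
      · exact ih (h+1) h1
      · have e : h + 1 = t + 1 := by omega
        rw [e, cW_eq_zero t m (t+1) (by omega), FW_top]
        norm_num
    · rcases eq_or_ne h 0 with rfl | hh0
      · simp
      · rw [if_neg hh0, if_neg hh0]
        exact ih (h-1) (by omega)


lemma A_eq_cW (t n : ℕ) (hn : 1 ≤ n) : A n t = cW t (2*n) 0 := by
  rw [A, if_neg (by omega), ← card_QW]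
  apply Nat.card_congr
  apply Equiv.subtypeEquivRight
  intro a
  constructor
  · rintro ⟨⟨h1, h2n, hstep, h0, hpad⟩, hle⟩
    refine ⟨h0, ?_, hle, hpad, h2n⟩
    intro i hi
    rcases Nat.eq_zero_or_pos i with rfl | hi1
    · left; rw [h1, h0]
    · exact hstep i hi1 hi
  · rintro ⟨h0, hstep, hle, hpad, hm⟩
    have h1 : a 1 = 1 := by
      have h2 := hstep 0 (by omega)
      norm_num at h2
      omega
    exact ⟨⟨h1, hm, fun i h1i h2i => hstep i h2i, h0, hpad⟩, hle⟩

lemma A_cast_eq_FW (t n : ℕ) (hn : 1 ≤ n) : (A n t : ℝ) = FW t (2*n) 0 := by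
  rw [A_eq_cW t n hn, cW_eq_FW t (2*n) 0 (Nat.zero_le t)]

/-- asymptotics of A (n, k-1). -/
theorem stmt13 (k : ℕ) (hk : 2 ≤ k) :
    Filter.Tendsto (fun n : ℕ =>
        (A n (k-1) : ℝ) /
          ((1 / (k+1)) * 4^(n+1) * Real.sin (Real.pi / (k+1))^2
            * Real.cos (Real.pi / (k+1))^(2*n)))
      Filter.atTop (nhds 1) := by
  have hk1 : 1 ≤ k := by omega
  set t : ℕ := k - 1 with htdef
  have ht1 : t + 1 = k := by omega
  have hcast : ((t:ℕ):ℝ) + 2 = (k:ℝ) + 1 := by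
    have : ((t:ℕ):ℝ) = (k:ℝ) - 1 := by
      rw [htdef]
      push_cast [hk1]
      ring
    rw [this]; ring
  set K : ℝ := (k:ℝ) + 1 with hKdef
  have hK0 : 0 < K := by positivity
  set θ : ℝ := Real.pi / K with hθdef
  have hpi := Real.pi_pos
  have hθ0 : 0 < θ := by positivity
  have hK3 : (3:ℝ) ≤ K := by
    rw [hKdef]
    have : (2:ℝ) ≤ (k:ℝ) := by exact_mod_cast hk
    linarith
  have hθπ2 : θ < Real.pi / 2 := by
    rw [hθdef, div_lt_div_iff₀ hK0 (by norm_num)]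
    nlinarith
  have hcosθ : 0 < Real.cos θ := Real.cos_pos_of_mem_Ioo
    ⟨by linarith, hθπ2⟩
  have hsinθ : 0 < Real.sin θ := Real.sin_pos_of_pos_of_lt_pi hθ0 (by linarith)
  -- the limit candidate function
  set R : ℕ → ℝ := fun n => ∑ j ∈ Finset.range k,
    (Real.sin (((j:ℝ)+1)*θ)^2 / (2 * Real.sin θ^2)) *
      ((Real.cos (((j:ℝ)+1)*θ) / Real.cos θ)^2)^n with hRdef
  have hEq : ∀ n : ℕ, 1 ≤ n →
      (A n t : ℝ) /
          ((1 / K) * 4^(n+1) * Real.sin θ^2 * Real.cos θ^(2*n)) = R n := by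
    intro n hn
    rw [A_cast_eq_FW t n hn, FW]
    simp only [hcast, ← hθdef, ← hKdef, ht1]
    rw [Finset.sum_div]
    apply Finset.sum_congr rfl
    intro j _
    set cj : ℝ := Real.cos (((j:ℝ)+1)*θ)
    set sj : ℝ := Real.sin (((j:ℝ)+1)*θ)
    have e0 : (((0:ℕ):ℝ)+1) * (((j:ℝ)+1)*θ) = ((j:ℝ)+1)*θ := by norm_num
    rw [e0]
    have e1 : (2*cj)^(2*n) = 4^n * (cj^2)^n := by
      rw [pow_mul, show (2*cj)^2 = 4*cj^2 by ring, mul_pow]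
    have e2 : Real.cos θ^(2*n) = (Real.cos θ^2)^n := by rw [pow_mul]
    have e3 : ((cj/Real.cos θ)^2)^n = (cj^2)^n / (Real.cos θ^2)^n := by
      rw [div_pow, div_pow]
    have e4 : (4:ℝ)^(n+1) = 4 * 4^n := by rw [pow_succ]; ring
    rw [e1, e2, e3, e4]
    have h4n : (0:ℝ) < 4^n := by positivity
    have hc2n : (0:ℝ) < (Real.cos θ^2)^n := by positivity
    have hs2 : Real.sin θ^2 ≠ 0 := by positivity
    field_simp
    ring
  have hterm : ∀ j ∈ Finset.range k, Filter.Tendsto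
      (fun n : ℕ => (Real.sin (((j:ℝ)+1)*θ)^2 / (2 * Real.sin θ^2)) *
        ((Real.cos (((j:ℝ)+1)*θ) / Real.cos θ)^2)^n) Filter.atTop
      (nhds (if j = 0 ∨ j = k - 1 then (1/2 : ℝ) else 0)) := by
    intro j hj
    rw [Finset.mem_range] at hj
    have hcoef : Real.sin θ^2 / (2 * Real.sin θ^2) = 1/2 := by
      rw [div_eq_div_iff (by positivity) (by norm_num)]
      ring
    rcases eq_or_ne j 0 with rfl | hj0
    · rw [if_pos (Or.inl rfl)]
      have hone : (((0:ℕ):ℝ)+1)*θ = θ := by norm_num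
      rw [hone, div_self hcosθ.ne']
      simp only [one_pow, mul_one, hcoef]
      exact tendsto_const_nhds
    · rcases eq_or_ne j (k-1) with rfl | hjk
      · rw [if_pos (Or.inr rfl)]
        have hone : (((k-1:ℕ):ℝ)+1)*θ = Real.pi - θ := by
          have h1 : ((k-1:ℕ):ℝ) = (k:ℝ) - 1 := by push_cast [hk1]; ring
          rw [h1, hθdef, hKdef]
          field_simp
          ring
        rw [hone, Real.sin_pi_sub, Real.cos_pi_sub]
        rw [neg_div, div_self hcosθ.ne']
        simp only [neg_one_sq, one_pow, mul_one, hcoef]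
        exact tendsto_const_nhds
      · rw [if_neg (by push_neg; exact ⟨hj0, hjk⟩)]
        have hj1 : 1 ≤ j := by omega
        have hjk2 : j + 1 < k := by omega
        have hx1 : θ < ((j:ℝ)+1)*θ := by
          have : (2:ℝ) ≤ (j:ℝ)+1 := by
            have : (1:ℝ) ≤ (j:ℝ) := by exact_mod_cast hj1
            linarith
          nlinarith
        have hx2 : ((j:ℝ)+1)*θ < Real.pi - θ := by
          have hk' : ((j:ℝ)+1) < (k:ℝ) := by exact_mod_cast hjk2
          have hkθ : (k:ℝ)*θ = Real.pi - θ := by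
            rw [hθdef, hKdef]; field_simp; ring
          nlinarith
        have hub : ((j:ℝ)+1)*θ ≤ Real.pi := by
          nlinarith
        have hlt : Real.cos (((j:ℝ)+1)*θ) < Real.cos θ :=
          Real.cos_lt_cos_of_nonneg_of_le_pi (le_of_lt hθ0) hub hx1
        have hgt : -Real.cos θ < Real.cos (((j:ℝ)+1)*θ) := by
          have := Real.cos_lt_cos_of_nonneg_of_le_pi
            (by positivity : (0:ℝ) ≤ ((j:ℝ)+1)*θ) (by linarith : Real.pi - θ ≤ Real.pi) hx2
          rwa [Real.cos_pi_sub] at this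
        have hsq : Real.cos (((j:ℝ)+1)*θ)^2 < Real.cos θ^2 := sq_lt_sq' hgt hlt
        have hq0 : (0:ℝ) ≤ (Real.cos (((j:ℝ)+1)*θ) / Real.cos θ)^2 := sq_nonneg _
        have hq1 : (Real.cos (((j:ℝ)+1)*θ) / Real.cos θ)^2 < 1 := by
          rw [div_pow, div_lt_one (by positivity)]
          exact hsq
        have h0 := tendsto_pow_atTop_nhds_zero_of_lt_one hq0 hq1
        have := h0.const_mul (Real.sin (((j:ℝ)+1)*θ)^2 / (2 * Real.sin θ^2))
        simpa using this
  have hsum : ∑ j ∈ Finset.range k, (if j = 0 ∨ j = k - 1 then (1/2 : ℝ) else 0) = 1 := by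
    have hsub : ({0, k-1} : Finset ℕ) ⊆ Finset.range k := by
      intro x hx
      simp only [Finset.mem_insert, Finset.mem_singleton] at hx
      rw [Finset.mem_range]
      omega
    rw [← Finset.sum_subset hsub (by
      intro x _ hx
      simp only [Finset.mem_insert, Finset.mem_singleton] at hx
      rw [if_neg (by tauto)])]
    rw [Finset.sum_pair (by omega : (0:ℕ) ≠ k-1)]
    rw [if_pos (Or.inl rfl), if_pos (Or.inr rfl)]
    norm_num
  have hlim : Filter.Tendsto R Filter.atTop (nhds 1) := by
    have h := tendsto_finset_sum (Finset.range k) hterm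
    rw [hsum] at h
    exact h
  apply hlim.congr'
  filter_upwards [Filter.eventually_ge_atTop 1] with n hn
  exact (hEq n hn).symm
end

section
/- For every fixed k ≥ 1, the probability P_{n,k} = B_{n,k}/C_n that a uniformly random Dyck path of semilength n has height at least k tends to 1 as n → ∞. -/
open Finset Real Filter

open List DyckStep

namespace Stmt14Aux

def stp (a : ℕ → ℕ) (i : ℕ) : Bool := decide (a (i+1) = a i + 1)

lemma isDyck_step {n : ℕ} {a : ℕ → ℕ} (h : IsDyckSeq n a) {i : ℕ} (hi : i < 2*n) :
    a (i+1) = a i + 1 ∨ a i = a (i+1) + 1 := by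
  rcases Nat.eq_zero_or_pos i with rfl | hpos
  · left; rw [h.2.2.2.1, h.1]
  · exact h.2.2.1 i hpos hi

lemma steps_determine {n : ℕ} {a b : ℕ → ℕ} (ha : IsDyckSeq n a) (hb : IsDyckSeq n b)
    (h : ∀ i < 2*n, stp a i = stp b i) : a = b := by
  have key : ∀ i, i ≤ 2*n → a i = b i := by
    intro i hi
    induction i with
    | zero => rw [ha.2.2.2.1, hb.2.2.2.1]
    | succ i ih =>
      have hi' : i < 2*n := hi
      have hab := ih hi'.le
      have hs := h i hi'
      simp only [stp, decide_eq_decide] at hs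
      rcases isDyck_step ha hi' with h1 | h1
      · have : b (i+1) = b i + 1 := hs.1 h1
        omega
      · rcases isDyck_step hb hi' with h4 | h4
        · have := hs.2 h4; omega
        · omega
  funext i
  rcases le_or_gt i (2*n) with hi | hi
  · exact key i hi
  · rw [ha.2.2.2.2 i hi, hb.2.2.2.2 i hi]

instance isDyck_finite (n : ℕ) : Finite {a : ℕ → ℕ // IsDyckSeq n a} := by
  apply Finite.of_injective (fun a => (fun i : Fin (2*n) => stp a.1 i))
  intro a b hab
  exact Subtype.ext (steps_determine a.2 b.2 fun i hi => congrFun hab ⟨i, hi⟩)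

variable {n : ℕ} {a : ℕ → ℕ}

def toW (n : ℕ) (a : ℕ → ℕ) : List DyckStep :=
  List.ofFn (n := 2*n) fun j => if a ((j:ℕ)+1) = a (j:ℕ) + 1 then U else D

lemma toW_length : (toW n a).length = 2*n := by simp [toW]

lemma toW_count (h : IsDyckSeq n a) :
    ∀ i, i ≤ 2*n → ((toW n a).take i).count U = ((toW n a).take i).count D + a i := by
  intro i hi
  induction i with
  | zero => simp [h.2.2.2.1]
  | succ i ih =>
    have hi' : i < 2*n := hi
    rw [List.take_succ]
    have hg : (toW n a)[i]? = some (if a (i+1) = a i + 1 then U else D) := by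
      rw [List.getElem?_eq_getElem (by simpa [toW_length] using hi')]
      simp [toW]
    rw [hg]
    simp only [Option.toList_some, List.count_append, ih hi'.le]
    rcases isDyck_step h hi' with h1 | h1
    · simp [h1]; omega
    · have h2 : ¬ (a (i+1) = a i + 1) := by omega
      simp only [h2, if_false]
      simp [List.count_singleton']
      omega

lemma toW_take_of_le {i : ℕ} (hi : 2*n ≤ i) : (toW n a).take i = toW n a :=
  List.take_of_length_le (by rw [toW_length]; exact hi)

lemma toW_count' (h : IsDyckSeq n a) (i : ℕ) :
    ((toW n a).take i).count U = ((toW n a).take i).count D + a (min i (2*n)) := by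
  rcases le_or_gt i (2*n) with hi | hi
  · rw [min_eq_left hi]; exact toW_count h i hi
  · rw [min_eq_right hi.le, toW_take_of_le hi.le, ← toW_take_of_le (le_refl (2*n))]
    exact toW_count h (2*n) le_rfl

def dw (h : IsDyckSeq n a) : DyckWord where
  toList := toW n a
  count_U_eq_count_D := by
    have := toW_count h (2*n) le_rfl
    rwa [toW_take_of_le le_rfl, h.2.1, Nat.add_zero] at this
  count_D_le_count_U i := by
    rw [toW_count' h i]; omega

lemma dw_semilength (h : IsDyckSeq n a) : (dw h).semilength = n := by
  have h2 := (dw h).two_mul_semilength_eq_length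
  have : (dw h).toList.length = 2*n := toW_length
  omega

def aW (p : DyckWord) (i : ℕ) : ℕ :=
  ((p.toList.take i).count U) - ((p.toList.take i).count D)

variable (p : DyckWord)

lemma aW_zero : aW p 0 = 0 := by simp [aW]

lemma aW_of_le {i : ℕ} (hi : p.toList.length ≤ i) : aW p i = 0 := by
  rw [aW, List.take_of_length_le hi, p.count_U_eq_count_D]; omega

lemma take_count (i : ℕ) (hi : i < p.toList.length) :
    ((p.toList.take (i+1)).count U = (p.toList.take i).count U + 1 ∧
      (p.toList.take (i+1)).count D = (p.toList.take i).count D ∧ p.toList[i] = U) ∨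
    ((p.toList.take (i+1)).count U = (p.toList.take i).count U ∧
      (p.toList.take (i+1)).count D = (p.toList.take i).count D + 1 ∧ p.toList[i] = D) := by
  rw [List.take_succ, List.getElem?_eq_getElem hi]
  rcases (p.toList[i]).dichotomy with h | h <;> rw [h] <;>
    simp [List.count_append, List.count_singleton']

lemma aW_succ (i : ℕ) (hi : i < p.toList.length) :
    aW p (i+1) = aW p i + 1 ∨ aW p i = aW p (i+1) + 1 := by
  have h1 := p.count_D_le_count_U i
  have h2 := p.count_D_le_count_U (i+1)
  rcases take_count p i hi with ⟨e1, e2, -⟩ | ⟨e1, e2, -⟩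
  · left; rw [aW, aW, e1, e2]; omega
  · right; rw [aW, aW, e1, e2]; omega

lemma aW_one (hne : p.toList ≠ []) : aW p 1 = 1 := by
  have h0 : 0 < p.toList.length := List.length_pos_iff.mpr hne
  have hU : p.toList[0] = U := by
    have := p.head_eq_U hne
    rwa [← List.getElem_zero h0] at this
  have : p.toList.take 1 = [U] := by
    rw [List.take_succ, List.take_zero, List.getElem?_eq_getElem h0, hU]
    rfl
  simp [aW, this]

lemma isDyck_aW {n : ℕ} (hn : 1 ≤ n) (hp : p.semilength = n) : IsDyckSeq n (aW p) := by
  have hlen : p.toList.length = 2*n := by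
    have := p.two_mul_semilength_eq_length; omega
  have hne : p.toList ≠ [] := by
    intro h; rw [h] at hlen; simp at hlen; omega
  refine ⟨aW_one p hne, aW_of_le p (le_of_eq hlen), ?_, aW_zero p,
    fun i hi => aW_of_le p (by omega)⟩
  intro i _ hi
  exact aW_succ p i (by omega)

lemma aW_dw (h : IsDyckSeq n a) : aW (dw h) = a := by
  funext i
  have : aW (dw h) i = a (min i (2*n)) := by
    have := toW_count' h i
    rw [aW]
    show ((toW n a).take i).count U - ((toW n a).take i).count D = _
    omega
  rw [this]
  rcases le_or_gt i (2*n) with hi | hi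
  · rw [min_eq_left hi]
  · rw [min_eq_right hi.le, h.2.1, (h.2.2.2.2 i hi)]

lemma dw_aW {n : ℕ} (hp : p.semilength = n) :
    toW n (aW p) = p.toList := by
  have hlen : p.toList.length = 2*n := by
    have := p.two_mul_semilength_eq_length; omega
  apply List.ext_getElem (by rw [toW_length, hlen])
  intro j hj hj'
  have hjn : j < 2*n := by rwa [toW_length] at hj
  have hjl : j < p.toList.length := by omega
  have hget : (toW n (aW p))[j] = if aW p (j+1) = aW p j + 1 then U else D := by
    simp [toW]
  rw [hget]
  have h1 := p.count_D_le_count_U j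
  have h2 := p.count_D_le_count_U (j+1)
  rcases take_count p j hjl with ⟨e1, e2, e3⟩ | ⟨e1, e2, e3⟩
  · rw [e3, if_pos]
    rw [aW, aW, e1, e2]; omega
  · rw [e3, if_neg]
    rw [aW, aW, e1, e2]; omega

noncomputable def dwEquiv (n : ℕ) (hn : 1 ≤ n) :
    {a : ℕ → ℕ // IsDyckSeq n a} ≃ {p : DyckWord // p.semilength = n} where
  toFun a := ⟨dw a.2, dw_semilength a.2⟩
  invFun p := ⟨aW p.1, isDyck_aW p.1 hn p.2⟩
  left_inv a := Subtype.ext (aW_dw a.2)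
  right_inv p := Subtype.ext (DyckWord.ext (dw_aW p.1 p.2))

lemma card_isDyck {n : ℕ} (hn : 1 ≤ n) :
    Nat.card {a : ℕ → ℕ // IsDyckSeq n a} = catalan n := by
  rw [Nat.card_congr (dwEquiv n hn), Nat.card_eq_fintype_card,
    DyckWord.card_dyckWord_semilength_eq_catalan]

lemma card_partition {α : Type*} (p q : α → Prop) [Finite {x // p x}] :
    Nat.card {x // p x ∧ q x} + Nat.card {x // p x ∧ ¬ q x} = Nat.card {x // p x} := by
  classical
  have e : ({x // p x ∧ q x} ⊕ {x // p x ∧ ¬ q x}) ≃ {x // p x} :=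
    ((Equiv.subtypeSubtypeEquivSubtypeInter p q).symm.sumCongr
      (Equiv.subtypeSubtypeEquivSubtypeInter p (fun x => ¬ q x)).symm).trans
      (Equiv.sumCompl fun y : {x // p x} => q y.1)
  have f1 : Finite {x // p x ∧ q x} := by
    apply Finite.of_injective (fun y : {x // p x ∧ q x} => (⟨y.1, y.2.1⟩ : {x // p x}))
    intro y z h
    simp only [Subtype.mk.injEq] at h
    exact Subtype.ext h
  have f2 : Finite {x // p x ∧ ¬ q x} := by
    apply Finite.of_injective (fun y : {x // p x ∧ ¬ q x} => (⟨y.1, y.2.1⟩ : {x // p x}))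
    intro y z h
    simp only [Subtype.mk.injEq] at h
    exact Subtype.ext h
  rw [← Nat.card_congr e, Nat.card_sum]

lemma run_up {a : ℕ → ℕ} (s : ℕ) :
    ∀ j, (∀ u, u < j → stp a (s+u) = true) → a (s+j) = a s + j := by
  intro j
  induction j with
  | zero => simp
  | succ j ih =>
    intro hu
    have h1 := hu j (by omega)
    have h2 : a (s+j+1) = a (s+j) + 1 := by simpa [stp] using h1
    have h3 := ih (fun u hu' => hu u (by omega))
    show a (s+j+1) = a s + (j+1)
    omega

lemma card_le_height (n t : ℕ) :
    Nat.card {a : ℕ → ℕ // IsDyckSeq n a ∧ ∀ i, a i ≤ t} ≤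
      (2^(t+1) - 1)^(2*n/(t+1)) * 2^(2*n % (t+1)) := by
  classical
  set m := t+1 with hm
  set q := 2*n/m with hq
  set r := 2*n % m with hr
  have hm0 : 0 < m := by omega
  have hdm : m * q + r = 2*n := Nat.div_add_mod (2*n) m
  have key : ∀ (a : ℕ → ℕ), IsDyckSeq n a → (∀ i, a i ≤ t) → ∀ x : ℕ, x < q →
      (fun j : Fin m => stp a (x*m + (j:ℕ))) ≠ (fun _ => true) := by
    intro a ha hb x hx hcontra
    have hall : ∀ u, u < m → stp a (x*m + u) = true := fun u hu =>
      congrFun hcontra ⟨u, hu⟩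
    have h1 := run_up (a := a) (x*m) m hall
    have hbb := hb (x*m + m)
    omega
  have hinj : Function.Injective
      (fun a : {a : ℕ → ℕ // IsDyckSeq n a ∧ ∀ i, a i ≤ t} =>
        ((fun x : Fin q => (⟨fun j : Fin m => stp a.1 ((x:ℕ)*m + (j:ℕ)),
            key a.1 a.2.1 a.2.2 x x.2⟩ : {v : Fin m → Bool // v ≠ fun _ => true})),
         (fun j : Fin r => stp a.1 (q*m + (j:ℕ))))) := by
    intro a b hab
    rw [Prod.mk.injEq] at hab
    obtain ⟨h1, h2⟩ := hab
    apply Subtype.ext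
    apply steps_determine a.2.1 b.2.1
    intro i hi
    have hid : m * (i/m) + i % m = i := Nat.div_add_mod i m
    rcases lt_or_ge (i/m) q with hx | hx
    · have := congrFun h1 ⟨i/m, hx⟩
      rw [Subtype.ext_iff] at this
      have := congrFun this ⟨i % m, Nat.mod_lt _ hm0⟩
      simpa only [show (i/m)*m + i % m = i by rw [Nat.mul_comm] at hid; omega] using this
    · have hge : m*q ≤ m*(i/m) := Nat.mul_le_mul_left m hx
      have hlt : i - m*q < r := by omega
      have := congrFun h2 ⟨i - m*q, hlt⟩
      simpa only [show q*m + (i - m*q) = i by rw [Nat.mul_comm q m]; omega] using this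
  have hcard := Nat.card_le_card_of_injective _ hinj
  calc Nat.card {a : ℕ → ℕ // IsDyckSeq n a ∧ ∀ i, a i ≤ t} ≤
      Nat.card ((Fin q → {v : Fin m → Bool // v ≠ fun _ => true}) × (Fin r → Bool)) := hcard
    _ = (2^m - 1)^q * 2^r := by
        rw [Nat.card_eq_fintype_card, Fintype.card_prod, Fintype.card_fun, Fintype.card_fun]
        congr 2
        · rw [Fintype.card_subtype_compl, Fintype.card_subtype_eq]
          simp
        · simp
        · simp

end Stmt14Aux

/-- the probability of reaching height k tends to 1. -/
theorem stmt14 (k : ℕ) (hk : 1 ≤ k) :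
    Filter.Tendsto (fun n : ℕ => (B n k : ℝ) / C n) Filter.atTop (nhds 1) := by
  classical
  have hC : ∀ n, C n = catalan n := fun n => by
    rw [catalan_eq_centralBinom_div]; rfl
  have hcat : ∀ n : ℕ, 0 < catalan n := by
    intro n
    rcases Nat.eq_zero_or_pos (catalan n) with h0 | h0
    · exfalso
      have h1 := Nat.centralBinom_pos n
      have h2 := succ_mul_catalan_eq_centralBinom n
      rw [h0, Nat.mul_zero] at h2
      omega
    · exact h0
  have hCpos : ∀ n : ℕ, (0:ℝ) < C n := fun n => by
    rw [hC]; exact_mod_cast hcat n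
  -- count identity
  have hsum : ∀ n : ℕ, 1 ≤ n → B n k + A n (k-1) = C n := by
    intro n hn
    have hn0 : n ≠ 0 := Nat.one_le_iff_ne_zero.mp hn
    have hiff : ∀ a : ℕ → ℕ,
        (IsDyckSeq n a ∧ ∀ i, a i ≤ k-1) ↔ (IsDyckSeq n a ∧ ¬ ∃ i, k ≤ a i) := by
      intro a
      constructor
      · rintro ⟨hd, hb⟩
        refine ⟨hd, ?_⟩
        rintro ⟨i, hi⟩
        have := hb i
        omega
      · rintro ⟨hd, hb⟩
        refine ⟨hd, fun i => ?_⟩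
        by_contra hc
        exact hb ⟨i, by omega⟩
    have hpart := Stmt14Aux.card_partition (IsDyckSeq n) (fun a => ∃ i, k ≤ a i)
    have hcongr : Nat.card {a : ℕ → ℕ // IsDyckSeq n a ∧ ∀ i, a i ≤ k-1} =
        Nat.card {a : ℕ → ℕ // IsDyckSeq n a ∧ ¬ ∃ i, k ≤ a i} :=
      Nat.card_congr (Equiv.subtypeEquivRight hiff)
    simp only [B, A, hn0, if_false]
    rw [hcongr, hpart, Stmt14Aux.card_isDyck hn, hC n]
  -- the geometric ratio
  set ρ : ℝ := ((2:ℝ)^k - 1)/2^k with hρdef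
  have h2k : (0:ℝ) < 2^k := by positivity
  have h2k1 : (1:ℝ) < 2^k := by
    apply one_lt_pow₀ (by norm_num) (by omega)
  have hρ0 : 0 ≤ ρ := by
    apply div_nonneg _ h2k.le
    linarith
  have hρpos : 0 < ρ := by
    apply div_pos _ h2k
    linarith
  have hρ1 : ρ < 1 := by
    rw [hρdef, div_lt_one h2k]; linarith
  have hmain : Filter.Tendsto (fun j : ℕ => (k:ℝ)^2 * ((j:ℝ)+1)^2 * ρ^j)
      Filter.atTop (nhds 0) := by
    have h0 := tendsto_pow_const_mul_const_pow_of_lt_one 2 hρ0 hρ1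
    have h1 := h0.comp (tendsto_add_atTop_nat 1)
    have h2 := h1.const_mul ((k:ℝ)^2/ρ)
    rw [mul_zero] at h2
    apply h2.congr
    intro j
    simp only [Function.comp]
    push_cast
    field_simp
    ring
  have hcomp : Filter.Tendsto (fun n : ℕ => 2*n/k) Filter.atTop Filter.atTop := by
    apply Filter.tendsto_atTop_atTop.mpr
    intro N
    refine ⟨k*N, fun n hn => ?_⟩
    rw [Nat.le_div_iff_mul_le (by omega)]
    calc N*k = k*N := Nat.mul_comm N k
      _ ≤ n := hn
      _ ≤ 2*n := by omega
  have hg := hmain.comp hcomp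
  have hA0 : Filter.Tendsto (fun n : ℕ => (A n (k-1) : ℝ) / C n) Filter.atTop (nhds 0) := by
    apply tendsto_of_tendsto_of_tendsto_of_le_of_le' tendsto_const_nhds hg
    · exact Filter.Eventually.of_forall fun n => by positivity
    · filter_upwards [Filter.eventually_ge_atTop 1] with n hn
      simp only [Function.comp]
      set q := 2*n/k with hqdef
      set r := 2*n % k with hrdef
      have hsub : k - 1 + 1 = k := by omega
      have hnat : A n (k-1) ≤ (2^k - 1)^q * 2^r := by
        simp only [A, if_neg (show ¬ n = 0 by omega)]
        have := Stmt14Aux.card_le_height n (k-1)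
        rwa [hsub] at this
      have e1 : k*q + r = 2*n := Nat.div_add_mod (2*n) k
      have e2 : 2*n+1 ≤ k*(q+1) := by
        have hrk : r < k := Nat.mod_lt _ (by omega)
        rw [Nat.mul_succ]
        omega
      have e3 : 4^n ≤ (k*(q+1))^2 * catalan n := by
        calc 4^n ≤ (2*n+1) * (2*n).choose n :=
              Nat.four_pow_le_two_mul_add_one_mul_central_binom n
          _ = (2*n+1) * ((n+1) * catalan n) := by
              rw [succ_mul_catalan_eq_centralBinom]; rfl
          _ = ((2*n+1) * (n+1)) * catalan n := by ring
          _ ≤ ((k*(q+1)) * (k*(q+1))) * catalan n := by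
              apply Nat.mul_le_mul_right
              exact Nat.mul_le_mul e2 (by omega)
          _ = (k*(q+1))^2 * catalan n := by ring
      have hr3 : (4:ℝ)^n ≤ ((k:ℝ)*((q:ℝ)+1))^2 * C n := by
        rw [hC n]
        exact_mod_cast Nat.cast_le.mpr e3
      have hApow : (A n (k-1) : ℝ) ≤ ρ^q * 4^n := by
        calc (A n (k-1):ℝ) ≤ (((2^k - 1)^q * 2^r : ℕ):ℝ) := Nat.cast_le.mpr hnat
          _ = ((2:ℝ)^k - 1)^q * 2^r := by
              rw [Nat.cast_mul, Nat.cast_pow, Nat.cast_pow,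
                Nat.cast_sub (Nat.one_le_two_pow)]
              push_cast
              ring
          _ = (ρ * 2^k)^q * 2^r := by
              rw [div_mul_cancel₀ _ h2k.ne']
          _ = ρ^q * ((2^k)^q * 2^r) := by rw [mul_pow]; ring
          _ = ρ^q * 4^n := by
              congr 1
              rw [← pow_mul, ← pow_add]
              have h4 : (4:ℝ)^n = 2^(2*n) := by rw [pow_mul]; norm_num
              rw [h4, e1]
      have final : (A n (k-1):ℝ) ≤ ((k:ℝ)^2 * ((q:ℝ)+1)^2 * ρ^q) * C n := by
        calc (A n (k-1):ℝ) ≤ ρ^q * 4^n := hApow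
          _ ≤ ρ^q * (((k:ℝ)*((q:ℝ)+1))^2 * C n) := by
              apply mul_le_mul_of_nonneg_left hr3 (by positivity)
          _ = _ := by ring
      exact (div_le_iff₀ (hCpos n)).mpr final
  have heq : (fun n : ℕ => 1 - (A n (k-1):ℝ)/C n) =ᶠ[Filter.atTop]
      (fun n : ℕ => (B n k : ℝ) / C n) := by
    filter_upwards [Filter.eventually_ge_atTop 1] with n hn
    have h := hsum n hn
    have hB : (B n k : ℝ) = (C n : ℝ) - A n (k-1) := by
      have hc := congrArg (Nat.cast (R := ℝ)) h
      push_cast at hc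
      linarith
    rw [hB, sub_div, div_self (hCpos n).ne']
  have hone : Filter.Tendsto (fun _ : ℕ => (1:ℝ)) Filter.atTop (nhds 1) := tendsto_const_nhds
  have hfin := hone.sub hA0
  rw [sub_zero] at hfin
  exact hfin.congr' heq
end

section
/- For every fixed k ≥ 1, lim_{n→∞} A_{n,k}/C_n = 0: the proportion of Dyck paths of semilength n with height at most k tends to 0. -/
open Finset Real Filter

/-- In a height-`≤ k` Dyck sequence, no aligned block of `k+1` steps is all "up". -/
lemma block_not_all_true (n k : ℕ) (a : ℕ → ℕ) (ha : IsDyckSeq n a) (hb : ∀ i, a i ≤ k)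
    (j : ℕ) :
    (fun l : Fin (k+1) => decide (a ((k+1)*j + l.1 + 1) = a ((k+1)*j + l.1) + 1))
      ≠ (fun _ => true) := by
  intro h
  obtain ⟨h1, h2n, hstep, h0, hpad⟩ := ha
  have hup : ∀ l : Fin (k+1), a ((k+1)*j + l.1 + 1) = a ((k+1)*j + l.1) + 1 := by
    intro l
    have := congrFun h l
    simpa using this
  by_cases hc : (k+1)*j + k < 2*n
  · have key : ∀ t, t ≤ k → a ((k+1)*j + t + 1) = a ((k+1)*j) + (t + 1) := by
      intro t
      induction t with
      | zero => intro _; simpa using hup ⟨0, by omega⟩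
      | succ s ih =>
        intro hs
        have h2 : a ((k+1)*j + s + 1 + 1) = a ((k+1)*j + s + 1) + 1 := hup ⟨s+1, by omega⟩
        have h3 := ih (by omega)
        show a ((k+1)*j + s + 1 + 1) = a ((k+1)*j) + (s + 1 + 1)
        omega
    have hK := key k le_rfl
    have := hb ((k+1)*j + k + 1)
    omega
  · have h2 : 2*n < (k+1)*j + k + 1 := by omega
    have hz : a ((k+1)*j + k + 1) = 0 := hpad _ h2
    have := hup ⟨k, by omega⟩
    simp only at this
    omega

/-- A Dyck sequence is determined by its step signs. -/
lemma steps_inj (n : ℕ) (a b : ℕ → ℕ) (ha : IsDyckSeq n a) (hb : IsDyckSeq n b)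
    (h : ∀ i, i < 2*n → ((a (i+1) = a i + 1) ↔ (b (i+1) = b i + 1))) : a = b := by
  obtain ⟨ha1, ha2n, hastep, ha0, hapad⟩ := ha
  obtain ⟨hb1, hb2n, hbstep, hb0, hbpad⟩ := hb
  funext i
  induction i with
  | zero => rw [ha0, hb0]
  | succ i ih =>
    by_cases h2 : 2*n < i+1
    · rw [hapad _ h2, hbpad _ h2]
    · by_cases hi0 : i = 0
      · subst hi0; rw [ha1, hb1]
      · have hi1 : 1 ≤ i := by omega
        have hilt : i < 2*n := by omega
        rcases hastep i hi1 hilt with hupa | hdna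
        · rw [hupa, (h i hilt).1 hupa, ih]
        · have hnup : ¬ (a (i+1) = a i + 1) := by omega
          have hnbup : ¬ (b (i+1) = b i + 1) := fun hc => hnup ((h i hilt).2 hc)
          rcases hbstep i hi1 hilt with hupb | hdnb
          · exact absurd hupb hnbup
          · omega

/-- Count bound: height-`≤ k` Dyck paths are at most `(2^(k+1)-1)^⌈2n/(k+1)⌉`. -/
lemma A_le (n k : ℕ) (hn : n ≠ 0) :
    A n k ≤ (2^(k+1) - 1) ^ ((2*n + k) / (k+1)) := by
  rw [A, if_neg hn]
  set m := (2*n + k) / (k+1) with hm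
  have hm2n : 2*n ≤ (k+1) * ((2*n + k) / (k+1)) := by
    have h1 := Nat.div_add_mod (2*n + k) (k+1)
    have h2 : (2*n + k) % (k+1) < k+1 := Nat.mod_lt _ (by omega)
    omega
  set S := {s : Fin (k+1) → Bool // s ≠ fun _ => true} with hS
  let F : {a : ℕ → ℕ // IsDyckSeq n a ∧ ∀ i, a i ≤ k} → (Fin m → S) :=
    fun a j => ⟨fun l => decide (a.1 ((k+1)*j.1 + l.1 + 1) = a.1 ((k+1)*j.1 + l.1) + 1),
      block_not_all_true n k a.1 a.2.1 a.2.2 j.1⟩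
  have hFinj : Function.Injective F := by
    intro a b hab
    apply Subtype.ext
    apply steps_inj n a.1 b.1 a.2.1 b.2.1
    intro i hi
    have hjm : i / (k+1) < m := by
      rw [hm, Nat.div_lt_iff_lt_mul (by omega : 0 < k+1), mul_comm]
      have h1 := Nat.div_add_mod (2*n + k) (k+1)
      have h2 : (2*n + k) % (k+1) < k+1 := Nat.mod_lt _ (by omega)
      omega
    have key := congrFun hab ⟨i/(k+1), hjm⟩
    have key2 := congrFun (Subtype.ext_iff.1 key) ⟨i % (k+1), Nat.mod_lt _ (by omega)⟩
    simp only [F] at key2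
    have hj : (k+1) * (i / (k+1)) + i % (k+1) = i := Nat.div_add_mod i (k+1)
    rw [hj] at key2
    exact decide_eq_decide.mp key2
  calc Nat.card {a : ℕ → ℕ // IsDyckSeq n a ∧ ∀ i, a i ≤ k}
      ≤ Nat.card (Fin m → S) := Nat.card_le_card_of_injective F hFinj
    _ = (2^(k+1) - 1) ^ m := by
        rw [Nat.card_fun, Nat.card_eq_fintype_card (α := Fin m), Fintype.card_fin]
        congr 1
        rw [hS, Nat.card_eq_fintype_card]
        have := Set.card_ne_eq (fun _ => true : Fin (k+1) → Bool)
        simp at this ⊢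

/-- Catalan lower bound for `n ≥ 4`. -/
lemma C_lb (n : ℕ) (hn : 4 ≤ n) : 4^n ≤ (n+1) * n * C n := by
  have h1 : 4^n < n * Nat.centralBinom n := Nat.four_pow_lt_mul_centralBinom n hn
  have h2 : (n+1) * C n = Nat.centralBinom n := by
    rw [C]
    exact Nat.mul_div_cancel' (Nat.succ_dvd_centralBinom n)
  calc 4^n ≤ n * Nat.centralBinom n := h1.le
    _ = (n+1) * n * C n := by rw [← h2]; ring

theorem stmt15 (k : ℕ) (hk : 1 ≤ k) :
    Filter.Tendsto (fun n : ℕ => (A n k : ℝ) / C n) Filter.atTop (nhds 0) := by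
  have hpow : 2 ≤ 2^(k+1) := by
    calc 2 = 2^1 := by norm_num
    _ ≤ 2^(k+1) := Nat.pow_le_pow_right (by norm_num) (by omega)
  set q : ℝ := ((2^(k+1) - 1 : ℕ) : ℝ) with hq
  have hq1 : (1:ℝ) ≤ q := by
    rw [hq]; exact_mod_cast (by omega : 1 ≤ 2^(k+1) - 1)
  have hq0 : (0:ℝ) ≤ q := by linarith
  set r : ℝ := q ^ ((1:ℝ)/(k+1)) with hr
  have hr1 : 1 ≤ r := Real.one_le_rpow hq1 (by positivity)
  have hrK : r ^ (k+1) = q := by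
    rw [hr, ← Real.rpow_natCast (q ^ ((1:ℝ)/(k+1))) (k+1), ← Real.rpow_mul hq0]
    rw [show (1:ℝ)/(k+1) * ((k+1 : ℕ) : ℝ) = 1 by push_cast; field_simp]
    exact Real.rpow_one q
  have hr2 : r < 2 := by
    have hq2 : q < 2^(k+1) := by
      rw [hq]
      calc ((2^(k+1) - 1 : ℕ) : ℝ) < ((2^(k+1) : ℕ) : ℝ) := by
            exact_mod_cast (by omega : 2^(k+1) - 1 < 2^(k+1))
        _ = 2^(k+1) := by push_cast; ring
    calc r < ((2:ℝ)^(k+1)) ^ ((1:ℝ)/(k+1)) := Real.rpow_lt_rpow hq0 hq2 (by positivity)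
      _ = 2 := by
          rw [← Real.rpow_natCast 2 (k+1), ← Real.rpow_mul (by norm_num)]
          rw [show ((k+1 : ℕ) : ℝ) * ((1:ℝ)/(k+1)) = 1 by push_cast; field_simp]
          exact Real.rpow_one 2
  set s : ℝ := r^2/4 with hs
  have hr0 : (0:ℝ) ≤ r := by linarith
  have hs0 : 0 ≤ s := by positivity
  have hs1 : s < 1 := by rw [hs]; nlinarith
  have hT : Filter.Tendsto (fun n : ℕ => (2 * r^k) * ((n:ℝ)^2 * s^n)) Filter.atTop (nhds 0) := by
    have h0 : Filter.Tendsto (fun n : ℕ => (n:ℝ)^2 * s^n) Filter.atTop (nhds 0) :=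
      (summable_pow_mul_geometric_of_norm_lt_one (R := ℝ) (r := s) 2
        (by rwa [Real.norm_eq_abs, abs_of_nonneg hs0])).tendsto_atTop_zero
    simpa using h0.const_mul (2 * r^k)
  apply squeeze_zero' ?_ ?_ hT
  · filter_upwards with n
    positivity
  · filter_upwards [Filter.eventually_ge_atTop 4] with n hn4
    have hC : 4^n ≤ (n+1) * n * C n := C_lb n hn4
    have hCpos : 0 < C n := by
      rcases Nat.eq_zero_or_pos (C n) with h | h
      · rw [h, mul_zero] at hC
        exact absurd hC (by positivity : (0:ℕ) < 4^n).not_ge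
      · exact h
    have hCR : (0:ℝ) < C n := by exact_mod_cast hCpos
    rw [div_le_iff₀ hCR]
    set M := (2*n + k)/(k+1) with hM
    have hA : (A n k : ℝ) ≤ q ^ M := by
      have h := A_le n k (by omega)
      calc (A n k : ℝ) ≤ (((2^(k+1) - 1) ^ M : ℕ) : ℝ) := by exact_mod_cast h
        _ = q ^ M := by rw [hq]; push_cast; ring
    have h1 : q ^ M = r ^ ((k+1) * M) := by rw [pow_mul, hrK]
    have h2 : r ^ ((k+1) * M) ≤ r ^ (2*n + k) := by
      apply pow_le_pow_right₀ hr1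
      calc (k+1) * M = M * (k+1) := by ring
        _ ≤ 2*n + k := by rw [hM]; exact Nat.div_mul_le_self _ _
    have h3 : r ^ (2*n+k) = r^k * (r^2)^n := by
      rw [← pow_mul, ← pow_add, Nat.add_comm]
    have h4 : (r:ℝ)^2 = 4 * s := by rw [hs]; ring
    have hC' : (4:ℝ)^n ≤ 2 * (n:ℝ)^2 * C n := by
      have hc1 : (4:ℝ)^n ≤ (((n+1) * n * C n : ℕ) : ℝ) := by exact_mod_cast hC
      have hn4' : (4:ℝ) ≤ (n:ℝ) := by exact_mod_cast hn4
      push_cast at hc1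
      have key : (0:ℝ) ≤ (n:ℝ) * ((n:ℝ)-1) * C n :=
        mul_nonneg (mul_nonneg (by linarith) (by linarith)) hCR.le
      nlinarith [key]
    calc (A n k : ℝ) ≤ q ^ M := hA
      _ = r ^ ((k+1) * M) := h1
      _ ≤ r ^ (2*n + k) := h2
      _ = r^k * (r^2)^n := h3
      _ = r^k * ((4:ℝ)^n * s^n) := by rw [h4, mul_pow]
      _ ≤ r^k * ((2 * (n:ℝ)^2 * C n) * s^n) := by
          apply mul_le_mul_of_nonneg_left ?_ (by positivity)
          exact mul_le_mul_of_nonneg_right hC' (by positivity)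
      _ = 2 * r^k * ((n:ℝ)^2 * s^n) * C n := by ring
end
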